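/- Let R₂ = γ(1−γ)|φ₋⟩⟨φ₋| with |φ±⟩ = (1/√10, 0, 0, ±3/√10)ᵀ, and define x₀ = γ(1−γ)(14−9γ)/20, x₁ = x₂ = −γ(1−γ)(26−15γ)/20, x₃ = 3γ(1−γ)(10−3γ)/20. Let M⁽⁰⁰⁾ be the 4×4 matrix satisfying V M⁽⁰⁰⁾ V† = −(1−γ)·Diag(γ(4−3γ)/16, −3γ(4−3γ)/80, γ(32−15γ)/80, (27γ²−56γ+80)/240) for the given orthogonal matrix V with rows (0,1/√2,1/√2,0), (−3/√10,0,0,1/√10), (0,−1/√2,1/√2,0), (1/√10,0,0,3/√10). Then for every γ ∈ [0,1]: 4M⁽⁰⁰⁾ + R₂^{T_B} − x₀|00⟩⟨00| − x₁|01⟩⟨01| − x₂|10⟩⟨10| − x₃|11⟩⟨11| = −(1/3)(1−γ)(4−γ)|φ₊⟩⟨φ₊| ≤ 0, and R₂ ≥ 0, and (9/4)x₀ + (3/4)x₁ + (3/4)x₂ + (1/4)x₃ = 0. -/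

import Mathlib

open Matrix ComplexOrder

noncomputable section

/-- Partial transpose on the second qubit. -/
def ptB (M : Matrix (Fin 2 × Fin 2) (Fin 2 × Fin 2) ℂ) :
    Matrix (Fin 2 × Fin 2) (Fin 2 × Fin 2) ℂ :=
  fun p q => M (p.1, q.2) (q.1, p.2)

/-- Index of the computational basis `|ab⟩ ↦ 2a+b`. -/
def idx (p : Fin 2 × Fin 2) : Fin 4 := ⟨2 * p.1.1 + p.2.1, by omega⟩

/-- The vectors `|φ±⟩ = (1/√10, 0, 0, ±3/√10)ᵀ`. -/
def phiP : Fin 2 × Fin 2 → ℂ := fun p =>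
  if p = (0, 0) then (Real.sqrt 10)⁻¹ else if p = (1, 1) then 3 * (Real.sqrt 10)⁻¹ else 0
def phiM : Fin 2 × Fin 2 → ℂ := fun p =>
  if p = (0, 0) then (Real.sqrt 10)⁻¹ else if p = (1, 1) then -(3 * (Real.sqrt 10)⁻¹) else 0

/-- The given orthogonal matrix `V`. -/
def Vmat : Matrix (Fin 2 × Fin 2) (Fin 2 × Fin 2) ℂ := fun p q =>
  (!![0, (Real.sqrt 2)⁻¹, (Real.sqrt 2)⁻¹, 0;
      -(3 * (Real.sqrt 10)⁻¹), 0, 0, (Real.sqrt 10)⁻¹;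
      0, -(Real.sqrt 2)⁻¹, (Real.sqrt 2)⁻¹, 0;
      (Real.sqrt 10)⁻¹, 0, 0, 3 * (Real.sqrt 10)⁻¹] : Matrix (Fin 4) (Fin 4) ℝ)
    (idx p) (idx q)

/-- The diagonal matrix `D(γ)` with `V M⁽⁰⁰⁾ V† = D(γ)`. -/
def Dmat (γ : ℝ) : Matrix (Fin 2 × Fin 2) (Fin 2 × Fin 2) ℂ :=
  Matrix.diagonal fun p =>
    (-(1 - γ) * (![γ * (4 - 3 * γ) / 16, -(3 * γ * (4 - 3 * γ)) / 80,
        γ * (32 - 15 * γ) / 80, (27 * γ ^ 2 - 56 * γ + 80) / 240] (idx p)) : ℝ)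

/-- The matrix `M⁽⁰⁰⁾` satisfying `V M⁽⁰⁰⁾ V† = D(γ)`. -/
def M00 (γ : ℝ) : Matrix (Fin 2 × Fin 2) (Fin 2 × Fin 2) ℂ := Vmatᴴ * Dmat γ * Vmat

/-- Basis projector `|ab⟩⟨ab|`. -/
def proj (a b : Fin 2) : Matrix (Fin 2 × Fin 2) (Fin 2 × Fin 2) ℂ :=
  fun p q => if p = (a, b) ∧ q = (a, b) then 1 else 0

/-- The explicit dual feasible solution for the universal no-go SDP:
`R₂ = γ(1−γ)|φ₋⟩⟨φ₋| ≥ 0`, the matrix identity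
`4M⁽⁰⁰⁾ + R₂^{T_B} − x₀|00⟩⟨00| − x₁|01⟩⟨01| − x₂|10⟩⟨10| − x₃|11⟩⟨11|
  = −(1/3)(1−γ)(4−γ)|φ₊⟩⟨φ₊| ≤ 0`, and the dual objective
`(9/4)x₀ + (3/4)x₁ + (3/4)x₂ + (1/4)x₃ = 0`. -/
lemma outer_psd (v : Fin 2 × Fin 2 → ℂ) : (vecMulVec v (star v)).PosSemidef := by
  have : vecMulVec v (star v) = replicateCol (Fin 1) v * (replicateCol (Fin 1) v)ᴴ := by
    rw [conjTranspose_replicateCol, vecMulVec_eq (Fin 1)]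
    rfl
  rw [this]
  exact posSemidef_self_mul_conjTranspose _

lemma psd_smul {n : Type*} [Fintype n] {M : Matrix n n ℂ} (hM : M.PosSemidef)
    {c : ℝ} (hc : 0 ≤ c) : ((c : ℂ) • M).PosSemidef := by
  refine .of_dotProduct_mulVec_nonneg ?_ fun x => ?_
  · unfold Matrix.IsHermitian
    rw [conjTranspose_smul, hM.1.eq]
    simp [Complex.conj_ofReal]
  · rw [smul_mulVec, dotProduct_smul, smul_eq_mul]
    exact mul_nonneg (by exact_mod_cast hc) (hM.dotProduct_mulVec_nonneg x)

set_option maxHeartbeats 2000000 in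
theorem stmt_17 (γ : ℝ) (hγ : γ ∈ Set.Icc (0 : ℝ) 1) :
    let R₂ : Matrix (Fin 2 × Fin 2) (Fin 2 × Fin 2) ℂ :=
      ((γ * (1 - γ) : ℝ) : ℂ) • vecMulVec phiM (star phiM)
    let x₀ : ℝ := γ * (1 - γ) * (14 - 9 * γ) / 20
    let x₁ : ℝ := -(γ * (1 - γ) * (26 - 15 * γ) / 20)
    let x₂ : ℝ := -(γ * (1 - γ) * (26 - 15 * γ) / 20)
    let x₃ : ℝ := 3 * γ * (1 - γ) * (10 - 3 * γ) / 20
    let LHS : Matrix (Fin 2 × Fin 2) (Fin 2 × Fin 2) ℂ :=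
      (4 : ℂ) • M00 γ + ptB R₂ - (x₀ : ℂ) • proj 0 0 - (x₁ : ℂ) • proj 0 1 -
        (x₂ : ℂ) • proj 1 0 - (x₃ : ℂ) • proj 1 1
    LHS = ((-(1 / 3) * (1 - γ) * (4 - γ) : ℝ) : ℂ) • vecMulVec phiP (star phiP) ∧
    (-LHS).PosSemidef ∧
    R₂.PosSemidef ∧
    (9 / 4) * x₀ + (3 / 4) * x₁ + (3 / 4) * x₂ + (1 / 4) * x₃ = 0 := by
  intro R₂ x₀ x₁ x₂ x₃ LHS
  have h2sq : (((Real.sqrt 2 : ℝ) : ℂ))⁻¹ ^ 2 = (2 : ℂ)⁻¹ := by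
    rw [← Complex.ofReal_inv, ← Complex.ofReal_pow]
    rw [← Real.sqrt_inv, Real.sq_sqrt (by norm_num : (0:ℝ) ≤ 2⁻¹)]
    norm_num
  have h10sq : (((Real.sqrt 10 : ℝ) : ℂ))⁻¹ ^ 2 = (10 : ℂ)⁻¹ := by
    rw [← Complex.ofReal_inv, ← Complex.ofReal_pow]
    rw [← Real.sqrt_inv, Real.sq_sqrt (by norm_num : (0:ℝ) ≤ 10⁻¹)]
    norm_num
  obtain ⟨hγ0, hγ1⟩ := hγ
  have hid : LHS = ((-(1 / 3) * (1 - γ) * (4 - γ) : ℝ) : ℂ) • vecMulVec phiP (star phiP) := by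
    ext ⟨⟨a, ha⟩, ⟨b, hb⟩⟩ ⟨⟨c, hc⟩, ⟨d, hd⟩⟩
    interval_cases a <;> interval_cases b <;> interval_cases c <;> interval_cases d <;>
      · simp only [LHS, R₂, x₀, x₁, x₂, x₃, M00, ptB, proj, phiP, phiM, vecMulVec_apply,
          Pi.star_apply, Matrix.mul_apply, Fintype.sum_prod_type, Fin.sum_univ_two,
          Matrix.conjTranspose_apply, Vmat, Dmat, idx, Matrix.diagonal_apply, Matrix.smul_apply,
          Matrix.add_apply, Matrix.sub_apply, smul_eq_mul]
        norm_num [Complex.conj_ofReal, Prod.ext_iff, Fin.ext_iff]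
        try ring_nf
        try simp only [h2sq, h10sq]
        try ring_nf
  refine ⟨hid, ?_, ?_, by simp only [x₀, x₁, x₂, x₃]; ring⟩
  · have hneg : -(((-(1 / 3) * (1 - γ) * (4 - γ) : ℝ) : ℂ) • vecMulVec phiP (star phiP))
        = (((1 / 3) * (1 - γ) * (4 - γ) : ℝ) : ℂ) • vecMulVec phiP (star phiP) := by
      rw [← neg_smul, ← Complex.ofReal_neg]
      ring_nf
    rw [hid, hneg]
    exact psd_smul (outer_psd phiP) (by nlinarith)
  · exact psd_smul (outer_psd phiM) (mul_nonneg hγ0 (by linarith))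

end
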